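/- arXiv:1306.0256 — 2 statements merged into one kernel-verified Lean document; each statement's English description precedes it below -/
import Mathlib

section
/- Let X_1, …, X_n be i.i.d. uniform on S^{p-1} (p ≥ 2) and ρ_ij = ⟨X_i, X_j⟩ for i < j. Then the random variables {ρ_ij : 1 ≤ i < j ≤ n} are pairwise independent and identically distributed; moreover, for each fixed pair (i, j), ρ_ij is independent of the collection {ρ_kl : {k,l} ∩ {i,j} = ∅}. -/
open Real MeasureTheory ProbabilityTheory Filter

/-- `μ` is the uniform (rotation-invariant) probability distribution on the unit
sphere `S^{p-1} ⊂ ℝ^p`. -/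
def IsUniformOnSphere (p : ℕ) (μ : Measure (EuclideanSpace ℝ (Fin p))) : Prop :=
  IsProbabilityMeasure μ ∧
  μ (Metric.sphere (0 : EuclideanSpace ℝ (Fin p)) 1)ᶜ = 0 ∧
  ∀ T : EuclideanSpace ℝ (Fin p) ≃ₗᵢ[ℝ] EuclideanSpace ℝ (Fin p), μ.map T = μ

set_option maxHeartbeats 1000000 in
/-- Let `X_1, X_2, …` be i.i.d. uniform on `S^{p-1}` (`p ≥ 2`) and
`ρ_ij = ⟨X_i, X_j⟩` for `i < j`. The `ρ_ij` are pairwise independent and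
identically distributed; moreover each `ρ_ij` is independent of the collection
`{ρ_kl : {k,l} ∩ {i,j} = ∅}`. -/
theorem rho_pairwise_independent (p : ℕ) (hp : 2 ≤ p)
    (μ : Measure (EuclideanSpace ℝ (Fin p))) (hμ : IsUniformOnSphere p μ)
    {Ω : Type} [MeasurableSpace Ω] (P : Measure Ω) [IsProbabilityMeasure P]
    (X : ℕ → Ω → EuclideanSpace ℝ (Fin p))
    (hmeas : ∀ i, Measurable (X i))
    (hlaw : ∀ i, Measure.map (X i) P = μ)
    (hindep : iIndepFun X P)
    (ρ : ℕ → ℕ → Ω → ℝ)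
    (hρ : ∀ i j ω, ρ i j ω = inner ℝ (X i ω) (X j ω)) :
    -- pairwise independent
    (∀ i j k l : ℕ, i < j → k < l → (i, j) ≠ (k, l) →
      IndepFun (ρ i j) (ρ k l) P) ∧
    -- identically distributed
    (∀ i j : ℕ, i < j → Measure.map (ρ i j) P = Measure.map (ρ 0 1) P) ∧
    -- each `ρ_ij` is independent of the family of the `ρ_kl` with disjoint indices
    (∀ i j : ℕ, i < j →
      IndepFun (ρ i j)
        (fun ω => fun q : {q : ℕ × ℕ // q.1 < q.2 ∧ q.1 ≠ i ∧ q.1 ≠ j ∧ q.2 ≠ i ∧ q.2 ≠ j} =>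
          ρ q.1.1 q.1.2 ω) P) := by
  classical
  obtain ⟨hprob, hsphere, hinv⟩ := hμ
  haveI := hprob
  set e₀ : EuclideanSpace ℝ (Fin p) := EuclideanSpace.single (⟨0, by omega⟩ : Fin p) (1:ℝ)
    with he₀
  have he₀norm : ‖e₀‖ = 1 := by
    rw [he₀, EuclideanSpace.norm_single]; norm_num
  set ν : Measure ℝ := μ.map (fun x => (inner ℝ x e₀ : ℝ)) with hν
  have hmeasInner : ∀ u : EuclideanSpace ℝ (Fin p),
      Measurable (fun x : EuclideanSpace ℝ (Fin p) => (inner ℝ x u : ℝ)) :=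
    fun u => measurable_id.inner measurable_const
  have hinner2 : Measurable (fun q : EuclideanSpace ℝ (Fin p) × EuclideanSpace ℝ (Fin p) => (inner ℝ q.1 q.2 : ℝ)) :=
    measurable_fst.inner measurable_snd
  -- Lemma A: rotation invariance gives a common one-dimensional marginal
  have hmapA : ∀ u : EuclideanSpace ℝ (Fin p), ‖u‖ = 1 →
      μ.map (fun x => (inner ℝ x u : ℝ)) = ν := by
    intro u hu
    set T := Submodule.reflection (ℝ ∙ (u - e₀))ᗮ with hT
    have hTu : T u = e₀ := Submodule.reflection_sub (by rw [hu, he₀norm])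
    rw [hν]
    conv_rhs => rw [← hinv T]
    rw [Measure.map_map (hmeasInner e₀) T.continuous.measurable]
    congr 1
    funext x
    simp only [Function.comp_apply]
    rw [← hTu, LinearIsometryEquiv.inner_map_map]
  -- almost every point is on the sphere
  have hae : ∀ᵐ x ∂μ, ‖x‖ = 1 := by
    rw [ae_iff]
    have h : {x : EuclideanSpace ℝ (Fin p) | ¬ ‖x‖ = 1}
        = (Metric.sphere (0 : EuclideanSpace ℝ (Fin p)) 1)ᶜ := by
      ext x; simp [mem_sphere_zero_iff_norm]
    rw [h]; exact hsphere
  -- Lemma E: the law of the inner product of two independent uniforms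
  have hmapE : (μ.prod μ).map (fun q : EuclideanSpace ℝ (Fin p) × EuclideanSpace ℝ (Fin p) => (inner ℝ q.1 q.2 : ℝ)) = ν := by
    ext A hA
    rw [Measure.map_apply hinner2 hA, Measure.prod_apply (hinner2 hA)]
    have hc : ∀ᵐ x ∂μ,
        μ (Prod.mk x ⁻¹' ((fun q : EuclideanSpace ℝ (Fin p) × EuclideanSpace ℝ (Fin p) => (inner ℝ q.1 q.2 : ℝ)) ⁻¹' A)) = ν A := by
      filter_upwards [hae] with x hx
      have h1 : Prod.mk x ⁻¹' ((fun q : EuclideanSpace ℝ (Fin p) × EuclideanSpace ℝ (Fin p) => (inner ℝ q.1 q.2 : ℝ)) ⁻¹' A)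
          = (fun y => (inner ℝ y x : ℝ)) ⁻¹' A := by
        ext y
        simp only [Set.mem_preimage]
        rw [real_inner_comm]
      rw [h1, ← Measure.map_apply (hmeasInner x) hA, hmapA x hx]
    rw [lintegral_congr_ae hc, lintegral_const, measure_univ, mul_one]
  -- law of a pair
  have hpair : ∀ a b : ℕ, a ≠ b →
      Measure.map (fun ω => (X a ω, X b ω)) P = μ.prod μ := by
    intro a b hab
    rw [(indepFun_iff_map_prod_eq_prod_map_map (hmeas a).aemeasurable
      (hmeas b).aemeasurable).mp (hindep.indepFun hab), hlaw, hlaw]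
  have hfunρ : ∀ a b : ℕ,
      ((fun q : EuclideanSpace ℝ (Fin p) × EuclideanSpace ℝ (Fin p) => (inner ℝ q.1 q.2 : ℝ)) ∘ fun ω => (X a ω, X b ω)) = ρ a b :=
    fun a b => funext fun ω => (hρ a b ω).symm
  -- Lemma F: the common law of ρ a b
  have hlawρ : ∀ a b : ℕ, a ≠ b → Measure.map (ρ a b) P = ν := by
    intro a b hab
    rw [← hfunρ a b, ← Measure.map_map hinner2 ((hmeas a).prodMk (hmeas b)),
      hpair a b hab, hmapE]
  have hmeasρ : ∀ a b : ℕ, Measurable (ρ a b) := by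
    intro a b
    have h : ρ a b = fun ω => (inner ℝ (X a ω) (X b ω) : ℝ) := funext (hρ a b)
    rw [h]; exact (hmeas a).inner (hmeas b)
  have hsymmρ : ∀ a b : ℕ, ρ a b = ρ b a := by
    intro a b; funext ω; rw [hρ, hρ, real_inner_comm]
  -- Lemma C: independence for pairs sharing one index
  have hC : ∀ a b c : ℕ, a ≠ b → b ≠ c → a ≠ c → IndepFun (ρ a b) (ρ b c) P := by
    intro a b c hab hbc hac
    rw [indepFun_iff_measure_inter_preimage_eq_mul]
    intro A B hA hB
    have hYlaw : Measure.map (fun ω => (X b ω, (X a ω, X c ω))) P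
        = μ.prod (μ.prod μ) := by
      have h1 : IndepFun (X b) (fun ω => (X a ω, X c ω)) P :=
        (hindep.indepFun_prodMk hmeas a c b hab hbc.symm).symm
      rw [(indepFun_iff_map_prod_eq_prod_map_map (hmeas b).aemeasurable
        ((hmeas a).prodMk (hmeas c)).aemeasurable).mp h1, hlaw, hpair a c hac]
    set S : Set (EuclideanSpace ℝ (Fin p) × (EuclideanSpace ℝ (Fin p) × EuclideanSpace ℝ (Fin p))) :=
      {q | (inner ℝ q.2.1 q.1 : ℝ) ∈ A ∧ (inner ℝ q.1 q.2.2 : ℝ) ∈ B} with hS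
    have hSm : MeasurableSet S := by
      have hf : Measurable fun q : EuclideanSpace ℝ (Fin p) × (EuclideanSpace ℝ (Fin p) × EuclideanSpace ℝ (Fin p)) => (inner ℝ q.2.1 q.1 : ℝ) :=
        (measurable_snd.fst).inner measurable_fst
      have hg : Measurable fun q : EuclideanSpace ℝ (Fin p) × (EuclideanSpace ℝ (Fin p) × EuclideanSpace ℝ (Fin p)) => (inner ℝ q.1 q.2.2 : ℝ) :=
        measurable_fst.inner (measurable_snd.snd)
      exact (hf hA).inter (hg hB)
    have hpre : ρ a b ⁻¹' A ∩ ρ b c ⁻¹' B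
        = (fun ω => (X b ω, (X a ω, X c ω))) ⁻¹' S := by
      ext ω
      simp only [Set.mem_inter_iff, Set.mem_preimage, hS, Set.mem_setOf_eq, hρ]
    have hP : P (ρ a b ⁻¹' A ∩ ρ b c ⁻¹' B) = (μ.prod (μ.prod μ)) S := by
      rw [hpre, ← Measure.map_apply
        ((hmeas b).prodMk ((hmeas a).prodMk (hmeas c))) hSm, hYlaw]
    have hcompute : (μ.prod (μ.prod μ)) S = ν A * ν B := by
      rw [Measure.prod_apply hSm]
      have hc : ∀ᵐ y ∂μ, (μ.prod μ) (Prod.mk y ⁻¹' S) = ν A * ν B := by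
        filter_upwards [hae] with y hy
        have h1 : Prod.mk y ⁻¹' S
            = ((fun x => (inner ℝ x y : ℝ)) ⁻¹' A) ×ˢ ((fun z => (inner ℝ z y : ℝ)) ⁻¹' B) := by
          ext q
          simp only [Set.mem_preimage, hS, Set.mem_setOf_eq, Set.mem_prod]
          rw [real_inner_comm y q.2]
        rw [h1, Measure.prod_prod, ← Measure.map_apply (hmeasInner y) hA,
          ← Measure.map_apply (hmeasInner y) hB, hmapA y hy]
      rw [lintegral_congr_ae hc, lintegral_const, measure_univ, mul_one]
    rw [hP, hcompute, ← Measure.map_apply (hmeasρ a b) hA,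
      ← Measure.map_apply (hmeasρ b c) hB, hlawρ a b hab, hlawρ b c hbc]
  -- Lemma D: independence for disjoint pairs
  have hD : ∀ a b c d : ℕ, a ≠ c → a ≠ d → b ≠ c → b ≠ d →
      IndepFun (ρ a b) (ρ c d) P := by
    intro a b c d h1 h2 h3 h4
    have h := (hindep.indepFun_prodMk_prodMk hmeas a b c d h1 h2 h3 h4).comp
      hinner2 hinner2
    rwa [hfunρ a b, hfunρ c d] at h
  refine ⟨?_, ?_, ?_⟩
  · -- pairwise independence
    intro i j k l hij hkl hne
    by_cases h1 : i = k
    · subst h1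
      have hjl : j ≠ l := fun h => hne (by rw [h])
      have h := hC j i l hij.ne' hkl.ne hjl
      rwa [hsymmρ j i] at h
    · by_cases h2 : i = l
      · subst h2
        have h := hC j i k hij.ne' h1 (hkl.trans hij).ne'
        rwa [hsymmρ j i, hsymmρ i k] at h
      · by_cases h3 : j = k
        · subst h3
          exact hC i j l hij.ne hkl.ne (hij.trans hkl).ne
        · by_cases h4 : j = l
          · subst h4
            have h := hC i j k hij.ne hkl.ne' h1
            rwa [hsymmρ j k] at h
          · exact hD i j k l h1 h2 h3 h4
  · -- identically distributed
    intro i j hij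
    rw [hlawρ i j hij.ne, hlawρ 0 1 (by norm_num)]
  · -- independence from the family with disjoint indices
    intro i j hij
    set S : Set ℕ := {i, j} with hSdef
    set mS : MeasurableSpace Ω := ⨆ k ∈ S, MeasurableSpace.comap (X k) inferInstance
      with hmS
    set mSc : MeasurableSpace Ω := ⨆ k ∈ Sᶜ, MeasurableSpace.comap (X k) inferInstance
      with hmSc
    have hIndep2 : Indep mS mSc P :=
      indep_iSup_of_disjoint (fun k => (hmeas k).comap_le) hindep disjoint_compl_right
    have key : ∀ (m : MeasurableSpace Ω) (a b : ℕ),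
        Measurable[m] (X a) → Measurable[m] (X b) → Measurable[m] (ρ a b) := by
      intro m a b ha hb
      have h : ρ a b = fun ω => (inner ℝ (X a ω) (X b ω) : ℝ) := funext (hρ a b)
      rw [h]; exact ha.inner hb
    have hXS : ∀ k ∈ S, Measurable[mS] (X k) := by
      intro k hk
      rw [measurable_iff_comap_le, hmS]
      exact le_biSup (fun k => MeasurableSpace.comap (X k) inferInstance) hk
    have hXSc : ∀ k ∈ Sᶜ, Measurable[mSc] (X k) := by
      intro k hk
      rw [measurable_iff_comap_le, hmSc]
      exact le_biSup (fun k => MeasurableSpace.comap (X k) inferInstance) hk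
    have h1 : Measurable[mS] (ρ i j) :=
      key mS i j (hXS i (by simp [hSdef])) (hXS j (by simp [hSdef]))
    have h2 : Measurable[mSc]
        (fun ω => fun q : {q : ℕ × ℕ // q.1 < q.2 ∧ q.1 ≠ i ∧ q.1 ≠ j ∧ q.2 ≠ i ∧ q.2 ≠ j} =>
          ρ q.1.1 q.1.2 ω) := by
      refine measurable_pi_lambda _ (fun q => ?_)
      obtain ⟨-, ha1, ha2, hb1, hb2⟩ := q.2
      exact key mSc q.1.1 q.1.2
        (hXSc _ (by simp [hSdef, ha1, ha2]))
        (hXSc _ (by simp [hSdef, hb1, hb2]))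
    exact indep_of_indep_of_le_right
      (indep_of_indep_of_le_left hIndep2 h1.comap_le) h2.comap_le
end

section
/- Let ξ_1, …, ξ_n be i.i.d. uniform on [0, 1] with order statistics ξ_{(1)} ≤ ⋯ ≤ ξ_{(n)}, and let W_n = min_{1≤i≤n−1} (ξ_{(i+1)} − ξ_{(i)}) be the smallest spacing. Then n² W_n converges in distribution to the exponential distribution with density e^{−x} on x ≥ 0. -/
open Real MeasureTheory ProbabilityTheory Filter

open Set in
lemma chain_lt' {n : ℕ} {s : ℝ} {σ : Equiv.Perm (Fin n)} {u : Fin n → ℝ}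
    (h : ∀ i j : Fin n, i < j → u (σ i) + s < u (σ j)) :
    ∀ (k : ℕ) (i j : Fin n), (j : ℕ) = (i : ℕ) + k + 1 →
      u (σ i) + s * (k + 1) < u (σ j) := by
  intro k
  induction k with
  | zero =>
    intro i j hij
    have : i < j := by rw [Fin.lt_def]; omega
    simpa using h i j this
  | succ k ih =>
    intro i j hij
    have hj' : (i : ℕ) + k + 1 < n := by have := j.isLt; omega
    set j' : Fin n := ⟨(i : ℕ) + k + 1, hj'⟩ with hj'def
    have h1 := ih i j' rfl
    have h2 : u (σ j') + s < u (σ j) := h j' j (by rw [Fin.lt_def]; simp [hj'def]; omega)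
    push_cast
    push_cast at h1
    linarith

lemma chain_lt {n : ℕ} {s : ℝ} {σ : Equiv.Perm (Fin n)} {u : Fin n → ℝ}
    (h : ∀ i j : Fin n, i < j → u (σ i) + s < u (σ j)) {i j : Fin n} (hij : i < j) :
    u (σ i) + s * (((j : ℕ) : ℝ) - ((i : ℕ) : ℝ)) < u (σ j) := by
  have hij' : (i : ℕ) < (j : ℕ) := hij
  obtain ⟨k, hk⟩ : ∃ k, (j : ℕ) = (i : ℕ) + k + 1 := ⟨(j : ℕ) - (i : ℕ) - 1, by omega⟩
  have := chain_lt' h k i j hk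
  have : (((j : ℕ) : ℝ) - ((i : ℕ) : ℝ)) = (k : ℝ) + 1 := by
    rw [hk]; push_cast; ring
  rw [this]
  exact chain_lt' h k i j hk

lemma chain_le {n : ℕ} {s : ℝ} {σ : Equiv.Perm (Fin n)} {u : Fin n → ℝ}
    (h : ∀ i j : Fin n, i < j → u (σ i) + s < u (σ j)) {i j : Fin n} (hij : i ≤ j) :
    u (σ i) + s * (((j : ℕ) : ℝ) - ((i : ℕ) : ℝ)) ≤ u (σ j) := by
  rcases eq_or_lt_of_le hij with rfl | hlt
  · simp
  · exact (chain_lt h hlt).le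

lemma null_diag {n : ℕ} {i j : Fin n} (hij : i ≠ j) :
    (volume : Measure (Fin n → ℝ)) {u | u i = u j} = 0 := by
  have heq : {u : Fin n → ℝ | u i = u j} =
      ↑(LinearMap.ker ((LinearMap.proj i : (Fin n → ℝ) →ₗ[ℝ] ℝ) - LinearMap.proj j)) := by
    ext u
    simp [LinearMap.mem_ker, sub_eq_zero]
  rw [heq]
  apply Measure.addHaar_submodule
  intro htop
  have hmem : (Pi.single i 1 : Fin n → ℝ) ∈
      LinearMap.ker ((LinearMap.proj i : (Fin n → ℝ) →ₗ[ℝ] ℝ) - LinearMap.proj j) := by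
    rw [htop]; trivial
  simp only [LinearMap.mem_ker, LinearMap.sub_apply, LinearMap.proj_apply] at hmem
  rw [Pi.single_eq_same, Pi.single_eq_of_ne hij.symm] at hmem
  norm_num at hmem

open Set in
lemma vol_pairwise (n : ℕ) (hn : 1 ≤ n) (s : ℝ) (hs : 0 ≤ s)
    (h1 : ((n : ℝ) - 1) * s ≤ 1) :
    (volume : Measure (Fin n → ℝ))
      {u | (∀ i, u i ∈ Set.Icc (0:ℝ) 1) ∧ ∀ i j, i ≠ j → s < |u i - u j|}
    = ENNReal.ofReal ((1 - ((n : ℝ) - 1) * s) ^ n) := by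
  set t : ℝ := 1 - ((n : ℝ) - 1) * s with ht_def
  have hn1 : (1 : ℝ) ≤ (n : ℝ) := by exact_mod_cast hn
  have ht0 : 0 ≤ t := by nlinarith
  set A : Equiv.Perm (Fin n) → Set (Fin n → ℝ) := fun σ =>
    {u | (∀ i, u i ∈ Set.Icc (0:ℝ) 1) ∧ ∀ i j : Fin n, i < j → u (σ i) + s < u (σ j)} with hA_def
  set B : Equiv.Perm (Fin n) → Set (Fin n → ℝ) := fun σ =>
    {u | (∀ i, u i ∈ Set.Icc (0:ℝ) t) ∧ ∀ i j : Fin n, i < j → u (σ i) < u (σ j)} with hB_def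
  set c : Equiv.Perm (Fin n) → (Fin n → ℝ) := fun σ j => s * ((σ.symm j : ℕ) : ℝ) with hc_def
  have measbox : ∀ r : ℝ, MeasurableSet {u : Fin n → ℝ | ∀ i, u i ∈ Set.Icc (0:ℝ) r} := by
    intro r
    have : {u : Fin n → ℝ | ∀ i, u i ∈ Set.Icc (0:ℝ) r} =
        ⋂ i, (fun u : Fin n → ℝ => u i) ⁻¹' (Set.Icc (0:ℝ) r) := by ext; simp
    rw [this]
    exact MeasurableSet.iInter fun i => (measurable_pi_apply i) measurableSet_Icc
  have measA : ∀ σ, MeasurableSet (A σ) := by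
    intro σ
    refine (measbox 1).inter ?_
    show MeasurableSet {u : Fin n → ℝ | ∀ i j : Fin n, i < j → u (σ i) + s < u (σ j)}
    have : {u : Fin n → ℝ | ∀ i j : Fin n, i < j → u (σ i) + s < u (σ j)} =
        ⋂ i, ⋂ j, ⋂ (_ : i < j), {u : Fin n → ℝ | u (σ i) + s < u (σ j)} := by ext; simp
    rw [this]
    exact .iInter fun i => .iInter fun j => .iInter fun _ =>
      measurableSet_lt (by fun_prop) (measurable_pi_apply (σ j))
  have measB : ∀ σ, MeasurableSet (B σ) := by
    intro σ
    refine (measbox t).inter ?_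
    show MeasurableSet {u : Fin n → ℝ | ∀ i j : Fin n, i < j → u (σ i) < u (σ j)}
    have : {u : Fin n → ℝ | ∀ i j : Fin n, i < j → u (σ i) < u (σ j)} =
        ⋂ i, ⋂ j, ⋂ (_ : i < j), {u : Fin n → ℝ | u (σ i) < u (σ j)} := by ext; simp
    rw [this]
    exact .iInter fun i => .iInter fun j => .iInter fun _ =>
      measurableSet_lt (measurable_pi_apply _) (measurable_pi_apply _)
  have injOf : ∀ (σ : Equiv.Perm (Fin n)) (u : Fin n → ℝ), StrictMono (u ∘ ⇑σ) →
      Function.Injective u := by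
    intro σ u h a b hab
    have h2 : (u ∘ ⇑σ) (σ.symm a) = (u ∘ ⇑σ) (σ.symm b) := by
      simp only [Function.comp_apply, Equiv.apply_symm_apply]; exact hab
    have h3 := h.injective h2
    have := congrArg σ h3
    simpa using this
  -- covering
  have hcover : {u : Fin n → ℝ | (∀ i, u i ∈ Set.Icc (0:ℝ) 1) ∧
      ∀ i j, i ≠ j → s < |u i - u j|} = ⋃ σ, A σ := by
    ext u
    simp only [Set.mem_setOf_eq, Set.mem_iUnion, hA_def]
    constructor
    · rintro ⟨hbox, hdist⟩
      have huinj : Function.Injective u := by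
        intro a b hab
        by_contra hne
        have := hdist a b hne
        rw [hab] at this
        simp at this
        linarith
      refine ⟨Tuple.sort u, hbox, ?_⟩
      intro i j hij
      have hsm : StrictMono (u ∘ ⇑(Tuple.sort u)) :=
        (Tuple.monotone_sort u).strictMono_of_injective (huinj.comp (Equiv.injective _))
      have hlt : u (Tuple.sort u i) < u (Tuple.sort u j) := hsm hij
      have hne : Tuple.sort u i ≠ Tuple.sort u j := fun h => absurd (congrArg u h) hlt.ne
      have hd := hdist (Tuple.sort u i) (Tuple.sort u j) hne
      rw [abs_sub_comm, abs_of_pos (by linarith)] at hd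
      linarith
    · rintro ⟨σ, hbox, hord⟩
      refine ⟨hbox, ?_⟩
      intro i j hij
      have hij' : σ.symm i ≠ σ.symm j := fun h => hij (by simpa using congrArg σ h)
      rcases lt_or_gt_of_ne hij' with hlt | hlt
      · have h2 := hord _ _ hlt
        simp only [Equiv.apply_symm_apply] at h2
        rw [abs_sub_comm, abs_of_pos (by linarith)]
        linarith
      · have h2 := hord _ _ hlt
        simp only [Equiv.apply_symm_apply] at h2
        rw [abs_of_pos (by linarith)]
        linarith
  -- disjointness of A σ
  have hdisjA : Pairwise (Function.onFun Disjoint A) := by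
    intro σ τ hst
    rw [Function.onFun, Set.disjoint_left]
    intro u huσ huτ
    have hsσ : StrictMono (u ∘ ⇑σ) := by
      intro i j hij
      have := huσ.2 i j hij
      simp only [Function.comp_apply]
      linarith
    have hsτ : StrictMono (u ∘ ⇑τ) := by
      intro i j hij
      have := huτ.2 i j hij
      simp only [Function.comp_apply]
      linarith
    have huinj := injOf σ u hsσ
    have heq := Tuple.unique_monotone hsσ.monotone hsτ.monotone
    exact hst (Equiv.ext fun i => huinj (congrFun heq i))
  -- A σ is a translate of B σ
  have hAB : ∀ σ, A σ = (fun u => u + (-(c σ))) ⁻¹' (B σ) := by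
    intro σ
    ext u
    simp only [Set.mem_preimage, hA_def, hB_def, Set.mem_setOf_eq, Pi.add_apply, Pi.neg_apply,
      hc_def, Set.mem_Icc]
    constructor
    · rintro ⟨hbox, hord⟩
      refine ⟨?_, ?_⟩
      · intro a
        set i : Fin n := σ.symm a with hi_def
        have ha : a = σ i := by simp [hi_def]
        constructor
        · have h0i : (⟨0, hn⟩ : Fin n) ≤ i := by simp [Fin.le_def]
          have hch := chain_le hord h0i
          have hb := (hbox (σ ⟨0, hn⟩)).1
          rw [ha]
          simp only [Fin.val_mk, Nat.cast_zero, sub_zero] at hch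
          linarith
        · have hl : i ≤ (⟨n - 1, by omega⟩ : Fin n) := by
            simp only [Fin.le_def, Fin.val_mk]
            omega
          have hch := chain_le hord hl
          have hb := (hbox (σ ⟨n - 1, by omega⟩)).2
          have hcast : (((n - 1 : ℕ) : ℝ)) = (n : ℝ) - 1 := by
            push_cast [Nat.cast_sub hn]; ring
          rw [Fin.val_mk, hcast] at hch
          rw [ha, ht_def]
          linarith
      · intro i j hij
        simp only [Equiv.symm_apply_apply]
        have := chain_lt hord hij
        linarith
    · rintro ⟨hbox, hord⟩
      simp only [Equiv.symm_apply_apply] at hord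
      refine ⟨?_, ?_⟩
      · intro a
        set i : Fin n := σ.symm a with hi_def
        have hb := hbox a
        rw [← hi_def] at hb
        have hin : ((i : ℕ) : ℝ) ≤ (n : ℝ) - 1 := by
          have h2 : (i : ℕ) ≤ n - 1 := by omega
          calc ((i : ℕ) : ℝ) ≤ ((n - 1 : ℕ) : ℝ) := by exact_mod_cast h2
            _ = (n : ℝ) - 1 := by push_cast [Nat.cast_sub hn]; ring
        have hsi : (0 : ℝ) ≤ s * ((i : ℕ) : ℝ) := by positivity
        have hsn : s * ((i : ℕ) : ℝ) ≤ s * ((n : ℝ) - 1) :=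
          mul_le_mul_of_nonneg_left hin hs
        rw [ht_def] at hb
        constructor
        · linarith [hb.1]
        · linarith [hb.2]
      · intro i j hij
        have hord' := hord i j hij
        have hij1 : ((i : ℕ) : ℝ) + 1 ≤ ((j : ℕ) : ℝ) := by
          have h3 : (i : ℕ) < (j : ℕ) := hij
          exact_mod_cast h3
        nlinarith [hord', hs]
  -- B σ a.e. facts
  have hBsub : ∀ σ, B σ ⊆ Set.univ.pi (fun _ : Fin n => Set.Icc (0:ℝ) t) := by
    intro σ u hu
    rw [Set.mem_univ_pi]
    exact hu.1
  set D : Set (Fin n → ℝ) := ⋃ (i : Fin n), ⋃ (j : Fin n), ⋃ (_ : i ≠ j), {u | u i = u j}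
    with hD_def
  have hDnull : (volume : Measure (Fin n → ℝ)) D = 0 :=
    measure_iUnion_null fun i => measure_iUnion_null fun j => measure_iUnion_null
      fun hij => null_diag hij
  have hABdisj : Pairwise (Function.onFun (AEDisjoint (volume : Measure (Fin n → ℝ))) B) := by
    intro σ τ hst
    have hsub : B σ ∩ B τ ⊆ D := by
      rintro u ⟨huσ, huτ⟩
      by_cases huinj : Function.Injective u
      · exfalso
        have hsσ : StrictMono (u ∘ ⇑σ) := fun i j hij => huσ.2 i j hij
        have hsτ : StrictMono (u ∘ ⇑τ) := fun i j hij => huτ.2 i j hij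
        have heq := Tuple.unique_monotone hsσ.monotone hsτ.monotone
        exact hst (Equiv.ext fun i => huinj (congrFun heq i))
      · simp only [Function.Injective, not_forall] at huinj
        obtain ⟨a, b, hab, hne⟩ := huinj
        simp only [hD_def, Set.mem_iUnion]
        exact ⟨a, b, hne, hab⟩
    exact measure_mono_null hsub hDnull
  have hBcover : Set.univ.pi (fun _ : Fin n => Set.Icc (0:ℝ) t) ⊆ (⋃ σ, B σ) ∪ D := by
    intro u hu
    rw [Set.mem_univ_pi] at hu
    by_cases huinj : Function.Injective u
    · left
      simp only [Set.mem_iUnion]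
      exact ⟨Tuple.sort u, hu, fun i j hij =>
        ((Tuple.monotone_sort u).strictMono_of_injective
          (huinj.comp (Equiv.injective _))) hij⟩
    · right
      simp only [Function.Injective, not_forall] at huinj
      obtain ⟨a, b, hab, hne⟩ := huinj
      simp only [hD_def, Set.mem_iUnion]
      exact ⟨a, b, hne, hab⟩
  have hb : (volume : Measure (Fin n → ℝ)) (Set.univ.pi fun _ : Fin n => Set.Icc (0:ℝ) t)
      = ENNReal.ofReal (t ^ n) := by
    rw [volume_pi_pi]
    simp only [Real.volume_Icc, sub_zero]
    rw [Finset.prod_const, Finset.card_univ, Fintype.card_fin, ← ENNReal.ofReal_pow ht0]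
  have hvolB : (volume : Measure (Fin n → ℝ)) (⋃ σ, B σ) = ENNReal.ofReal (t ^ n) := by
    apply le_antisymm
    · rw [← hb]
      exact measure_mono (Set.iUnion_subset hBsub)
    · rw [← hb]
      refine (measure_mono hBcover).trans ?_
      refine (measure_union_le _ _).trans ?_
      rw [hDnull, add_zero]
  rw [hcover, measure_iUnion hdisjA measA]
  have htrans : ∀ σ, (volume : Measure (Fin n → ℝ)) (A σ) = volume (B σ) := by
    intro σ
    rw [hAB σ]
    exact measure_preimage_add_right _ _ _
  rw [tsum_congr htrans, ← measure_iUnion₀ hABdisj (fun σ => (measB σ).nullMeasurableSet), hvolB]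

lemma tendsto_aux (x : ℝ) (hx : 0 ≤ x) :
    Tendsto (fun n : ℕ => (1 - ((n:ℝ) - 1) * (x / (n:ℝ)^2)) ^ n) atTop
      (nhds (Real.exp (-x))) := by
  rcases eq_or_lt_of_le hx with rfl | hxpos
  · simp only [zero_div, mul_zero, sub_zero, one_pow, neg_zero, Real.exp_zero]
    exact tendsto_const_nhds
  · set c : ℕ → ℝ := fun n => -(((n:ℝ) - 1) * (x / (n:ℝ)^2)) with hc_def
    have hnc : Tendsto (fun n : ℕ => (n:ℝ) * c n) atTop (nhds (-x)) := by
      have h1 : Tendsto (fun n : ℕ => -(1 - 1/(n:ℝ)) * x) atTop (nhds (-x)) := by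
        have h0 : Tendsto (fun n : ℕ => (1:ℝ) - 1/(n:ℝ)) atTop (nhds (1 - 0)) :=
          ((tendsto_const_nhds : Tendsto (fun _ : ℕ => (1:ℝ)) atTop (nhds 1))).sub
            tendsto_one_div_atTop_nhds_zero_nat
        have h2 := (h0.neg).mul_const x
        simpa using h2
      refine Tendsto.congr' ?_ h1
      filter_upwards [eventually_ge_atTop 1] with n hn
      have hn0 : (n:ℝ) ≠ 0 := by positivity
      simp only [hc_def]
      field_simp
    have hc0 : Tendsto c atTop (nhds 0) := by
      have h1 : Tendsto (fun n : ℕ => ((n:ℝ) * c n) * (1/(n:ℝ))) atTop (nhds ((-x) * 0)) :=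
        hnc.mul tendsto_one_div_atTop_nhds_zero_nat
      rw [mul_zero] at h1
      refine Tendsto.congr' ?_ h1
      filter_upwards [eventually_ge_atTop 1] with n hn
      have hn0 : (n:ℝ) ≠ 0 := by positivity
      field_simp
    have hcneg : ∀ᶠ n : ℕ in atTop, c n < 0 := by
      filter_upwards [eventually_ge_atTop 2] with n hn
      have h2 : (2:ℝ) ≤ (n:ℝ) := by exact_mod_cast hn
      have : 0 < ((n:ℝ) - 1) * (x / (n:ℝ)^2) := by
        apply mul_pos (by linarith)
        positivity
      simp only [hc_def]
      linarith
    have hcgt : ∀ᶠ n : ℕ in atTop, -1 < c n := by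
      have := hc0.eventually (eventually_gt_nhds (by norm_num : (-1:ℝ) < 0))
      exact this
    have hslope : Tendsto (fun u : ℝ => Real.log (1+u) / u) (nhdsWithin 0 {0}ᶜ) (nhds 1) := by
      have hinner : HasDerivAt (fun u : ℝ => 1 + u) 1 0 := by
        simpa using (hasDerivAt_id (0:ℝ)).const_add 1
      have houter : HasDerivAt Real.log 1⁻¹ ((fun u : ℝ => 1 + u) 0) := by
        simpa using Real.hasDerivAt_log (by norm_num : (1:ℝ) ≠ 0)
      have hd : HasDerivAt (fun u : ℝ => Real.log (1 + u)) 1 0 := by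
        have h := houter.comp 0 hinner; simp only [inv_one, mul_one] at h; exact h
      rw [hasDerivAt_iff_tendsto_slope] at hd
      refine hd.congr fun u => ?_
      simp [slope_fun_def, div_eq_inv_mul]
    have hcin : Tendsto c atTop (nhdsWithin 0 {0}ᶜ) := by
      rw [tendsto_nhdsWithin_iff]
      refine ⟨hc0, ?_⟩
      filter_upwards [hcneg] with n hn
      simp only [Set.mem_compl_iff, Set.mem_singleton_iff]
      linarith
    have hlog : Tendsto (fun n : ℕ => (n:ℝ) * Real.log (1 + c n)) atTop (nhds (-x)) := by
      have h1 : Tendsto (fun n : ℕ => ((n:ℝ) * c n) * (Real.log (1 + c n) / c n)) atTop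
          (nhds ((-x) * 1)) := hnc.mul (hslope.comp hcin)
      rw [mul_one] at h1
      refine Tendsto.congr' ?_ h1
      filter_upwards [hcneg] with n hn
      have hcn0 : c n ≠ 0 := by linarith
      field_simp
    have hexp : Tendsto (fun n : ℕ => Real.exp ((n:ℝ) * Real.log (1 + c n))) atTop
        (nhds (Real.exp (-x))) := (Real.continuous_exp.tendsto _).comp hlog
    refine Tendsto.congr' ?_ hexp
    filter_upwards [hcneg, hcgt] with n hn1 hn2
    have hpos : 0 < 1 + c n := by linarith
    rw [← Real.log_pow, Real.exp_log (pow_pos hpos n)]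
    have h3 : 1 + c n = 1 - ((n:ℝ) - 1) * (x / (n:ℝ)^2) := by simp only [hc_def]; ring
    rw [h3]

lemma joint_law {Ω : Type} [MeasurableSpace Ω] (P : Measure Ω) [IsProbabilityMeasure P]
    (ξ : ℕ → Ω → ℝ) (hmeas : ∀ i, Measurable (ξ i))
    (hlaw : ∀ i, Measure.map (ξ i) P = MeasureTheory.volume.restrict (Set.Icc (0 : ℝ) 1))
    (hindep : iIndepFun ξ P) (n : ℕ) :
    Measure.map (fun ω (i : Fin n) => ξ (i : ℕ) ω) P
      = Measure.pi (fun _ : Fin n => volume.restrict (Set.Icc (0:ℝ) 1)) := by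
  have hΦ : Measurable (fun ω (i : Fin n) => ξ (i : ℕ) ω) :=
    measurable_pi_lambda _ fun i => hmeas i
  refine (Measure.pi_eq fun s hs => ?_).symm
  rw [Measure.map_apply hΦ (MeasurableSet.univ_pi hs)]
  classical
  set sets : ℕ → Set ℝ := fun j => if h : j < n then s ⟨j, h⟩ else Set.univ with hsets
  have hpre : (fun ω (i : Fin n) => ξ (i : ℕ) ω) ⁻¹' (Set.univ.pi s)
      = ⋂ j ∈ Finset.range n, ξ j ⁻¹' sets j := by
    ext ω
    simp only [Set.mem_preimage, Set.mem_univ_pi, Set.mem_iInter, Finset.mem_range]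
    constructor
    · intro h j hj
      simp only [hsets, Set.mem_preimage, dif_pos hj]
      exact h ⟨j, hj⟩
    · intro h i
      have := h (i : ℕ) i.isLt
      simpa [hsets, i.isLt] using this
  rw [hpre, hindep.measure_inter_preimage_eq_mul (Finset.range n)
    (fun j hj => by
      simp only [hsets]
      split_ifs with h
      · exact hs _
      · exact MeasurableSet.univ)]
  rw [← Fin.prod_univ_eq_prod_range (fun j => P (ξ j ⁻¹' sets j)) n]
  refine Finset.prod_congr rfl fun i _ => ?_
  have hsi : sets (i : ℕ) = s i := by simp [hsets, i.isLt]
  rw [hsi, ← Measure.map_apply (hmeas (i : ℕ)) (hs i), hlaw]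

lemma pi_restrict (n : ℕ) :
    Measure.pi (fun _ : Fin n => (volume : Measure ℝ).restrict (Set.Icc (0:ℝ) 1))
      = (volume : Measure (Fin n → ℝ)).restrict (Set.univ.pi fun _ => Set.Icc (0:ℝ) 1) := by
  refine Measure.pi_eq fun s hs => ?_
  rw [Measure.restrict_apply (MeasurableSet.univ_pi hs)]
  have : Set.univ.pi s ∩ (Set.univ.pi fun _ : Fin n => Set.Icc (0:ℝ) 1)
      = Set.univ.pi (fun i => s i ∩ Set.Icc (0:ℝ) 1) := by
    ext u
    simp only [Set.mem_inter_iff, Set.mem_univ_pi, Set.mem_Icc, ← forall_and]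
  rw [this, volume_pi_pi]
  exact Finset.prod_congr rfl fun i _ => (Measure.restrict_apply (hs i)).symm

/-- Let `ξ_1, ξ_2, …` be i.i.d. uniform on `[0,1]` and let
`W_n = min_{1≤i≤n−1}(ξ_{(i+1)} − ξ_{(i)})` be the smallest spacing of the first
`n` observations (equivalently, the minimum pairwise distance
`min_{i<j≤n} |ξ_i − ξ_j|`). Then `n² W_n` converges in distribution to the
exponential distribution with density `e^{−x}` on `x ≥ 0`. -/
theorem smallest_spacing_limit_law
    {Ω : Type} [MeasurableSpace Ω] (P : Measure Ω) [IsProbabilityMeasure P]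
    (ξ : ℕ → Ω → ℝ)
    (hmeas : ∀ i, Measurable (ξ i))
    (hlaw : ∀ i, Measure.map (ξ i) P =
      MeasureTheory.volume.restrict (Set.Icc (0 : ℝ) 1))
    (hindep : iIndepFun ξ P) :
    ∀ x : ℝ,
      Tendsto (fun n : ℕ =>
          (P {ω | (n : ℝ) ^ 2 *
              sInf {r | ∃ i j, i < j ∧ j < n ∧ r = |ξ i ω - ξ j ω|} ≤ x}).toReal)
        atTop
        (nhds (if 0 ≤ x then 1 - Real.exp (-x) else 0)) := by
  intro x
  by_cases hx : 0 ≤ x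
  · rw [if_pos hx]
    have hev : ∀ᶠ n : ℕ in atTop,
        (P {ω | (n : ℝ) ^ 2 *
            sInf {r | ∃ i j, i < j ∧ j < n ∧ r = |ξ i ω - ξ j ω|} ≤ x}).toReal
        = 1 - (1 - ((n:ℝ) - 1) * (x / (n:ℝ)^2)) ^ n := by
      filter_upwards [eventually_ge_atTop 2,
        (tendsto_natCast_atTop_atTop (R := ℝ)).eventually_ge_atTop x] with n hn2 hnx
      have hn1 : 1 ≤ n := by omega
      have hnR : (2:ℝ) ≤ (n:ℝ) := by exact_mod_cast hn2
      have hpos : (0:ℝ) < (n:ℝ)^2 := by positivity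
      set s : ℝ := x / (n:ℝ)^2 with hs_def
      have hs : 0 ≤ s := by positivity
      have h1 : ((n:ℝ) - 1) * s ≤ 1 := by
        rw [hs_def]
        rw [mul_div_assoc']
        rw [div_le_one hpos]
        nlinarith
      -- the good event
      set C : Set (Fin n → ℝ) := {u | ∀ i j : Fin n, i ≠ j → s < |u i - u j|} with hC_def
      have measC : MeasurableSet C := by
        have : C = ⋂ i, ⋂ j, ⋂ (_ : i ≠ j),
            {u : Fin n → ℝ | s < |u i - u j|} := by ext; simp [hC_def]
        rw [this]
        exact .iInter fun i => .iInter fun j => .iInter fun _ =>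
          measurableSet_lt measurable_const
            ((measurable_pi_apply i).sub (measurable_pi_apply j)).abs
      have hΦ : Measurable (fun ω (i : Fin n) => ξ (i : ℕ) ω) :=
        measurable_pi_lambda _ fun i => hmeas i
      set G : Set Ω := (fun ω (i : Fin n) => ξ (i : ℕ) ω) ⁻¹' C with hG_def
      have hGmeas : MeasurableSet G := hΦ measC
      -- event identification
      have hEG : {ω | (n : ℝ) ^ 2 *
          sInf {r | ∃ i j, i < j ∧ j < n ∧ r = |ξ i ω - ξ j ω|} ≤ x} = Gᶜ := by
        ext ω
        simp only [Set.mem_setOf_eq, Set.mem_compl_iff, hG_def, Set.mem_preimage, hC_def]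
        set S : Set ℝ := {r | ∃ i j, i < j ∧ j < n ∧ r = |ξ i ω - ξ j ω|} with hS_def
        have hfin : S.Finite := by
          apply Set.Finite.subset (Set.Finite.image (fun p : ℕ × ℕ => |ξ p.1 ω - ξ p.2 ω|)
            ((Set.finite_Iio n).prod (Set.finite_Iio n)))
          rintro r ⟨i, j, hij, hjn, rfl⟩
          exact ⟨(i, j), ⟨by simpa using lt_trans hij hjn, by simpa using hjn⟩, rfl⟩
        have hSne : S.Nonempty := ⟨|ξ 0 ω - ξ 1 ω|, 0, 1, by omega, by omega, rfl⟩
        have hbdd : BddBelow S := hfin.bddBelow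
        have hmem : sInf S ∈ S := hSne.csInf_mem hfin
        have hiff1 : (n : ℝ)^2 * sInf S ≤ x ↔ sInf S ≤ s := by
          rw [hs_def, mul_comm, ← le_div_iff₀ hpos]
        rw [hiff1]
        constructor
        · -- sInf ≤ s → ¬ all pairwise > s
          intro hle hall
          obtain ⟨i, j, hij, hjn, hr⟩ := hmem
          have hne : (⟨i, lt_trans hij hjn⟩ : Fin n) ≠ ⟨j, hjn⟩ := by
            intro h
            exact absurd (congrArg Fin.val h) (by simp; omega)
          have := hall ⟨i, lt_trans hij hjn⟩ ⟨j, hjn⟩ hne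
          simp only at this
          rw [← hr] at this
          linarith
        · -- ¬ all pairwise > s → sInf ≤ s
          intro hnall
          by_contra hgt
          push_neg at hgt
          apply hnall
          intro i j hne
          have hvne : (i:ℕ) ≠ (j:ℕ) := fun h => hne (Fin.ext h)
          rcases lt_or_gt_of_ne hvne with hlt | hlt
          · have hrS : |ξ (i:ℕ) ω - ξ (j:ℕ) ω| ∈ S := ⟨i, j, hlt, j.isLt, rfl⟩
            calc s < sInf S := hgt
              _ ≤ _ := csInf_le hbdd hrS
          · have hrS : |ξ (j:ℕ) ω - ξ (i:ℕ) ω| ∈ S := ⟨j, i, hlt, i.isLt, rfl⟩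
            rw [abs_sub_comm]
            calc s < sInf S := hgt
              _ ≤ _ := csInf_le hbdd hrS
      rw [hEG]
      have hPG : P G = ENNReal.ofReal ((1 - ((n:ℝ) - 1) * s) ^ n) := by
        rw [hG_def, ← Measure.map_apply hΦ measC,
          joint_law P ξ hmeas hlaw hindep n, pi_restrict n,
          Measure.restrict_apply measC]
        rw [← vol_pairwise n hn1 s hs h1]
        congr 1
        ext u
        simp only [Set.mem_inter_iff, Set.mem_setOf_eq, Set.mem_univ_pi, hC_def]
        tauto
      rw [measure_compl hGmeas (measure_ne_top P G), hPG, measure_univ]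
      have ht0 : 0 ≤ 1 - ((n:ℝ) - 1) * s := by nlinarith [h1]
      have htn1 : (1 - ((n:ℝ) - 1) * s) ^ n ≤ 1 := by
        apply pow_le_one₀ ht0
        nlinarith [mul_nonneg (by linarith : (0:ℝ) ≤ (n:ℝ) - 1) hs]
      have htn0 : 0 ≤ (1 - ((n:ℝ) - 1) * s) ^ n := pow_nonneg ht0 n
      rw [show (1 : ENNReal) = ENNReal.ofReal 1 by simp,
        ← ENNReal.ofReal_sub 1 htn0, ENNReal.toReal_ofReal (by linarith)]
    refine Tendsto.congr' (hev.mono fun n h => h.symm) ?_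
    have := (tendsto_const_nhds (α := ℕ) (f := atTop) (x := (1:ℝ))).sub (tendsto_aux x hx)
    exact this
  · rw [if_neg hx]
    push_neg at hx
    have hempty : ∀ n : ℕ, {ω | (n : ℝ) ^ 2 *
        sInf {r | ∃ i j, i < j ∧ j < n ∧ r = |ξ i ω - ξ j ω|} ≤ x} = (∅ : Set Ω) := by
      intro n
      ext ω
      simp only [Set.mem_setOf_eq, Set.mem_empty_iff_false, iff_false, not_le]
      have h0 : 0 ≤ sInf {r | ∃ i j, i < j ∧ j < n ∧ r = |ξ i ω - ξ j ω|} := by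
        apply Real.sInf_nonneg
        rintro r ⟨i, j, _, _, rfl⟩
        exact abs_nonneg _
      have : 0 ≤ (n : ℝ)^2 * sInf {r | ∃ i j, i < j ∧ j < n ∧ r = |ξ i ω - ξ j ω|} :=
        mul_nonneg (by positivity) h0
      linarith
    simp only [hempty, measure_empty, ENNReal.toReal_zero]
    exact tendsto_const_nhds
end
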